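/- Let R be the free associative algebra Φ⟨x₁,...,x_r⟩, r > 1. For j = 1,...,r fix sequences (α_{ji})_{i≥1} of scalars, and for each monomial v = x_{j₁}···x_{j_d} define the quasi-monomial e_v = (x_{j₁} - α_{j₁,1})···(x_{j_d} - α_{j_d,d}). Let Δ_i be the two-sided ideal generated by x₁ - α_{1i}, ..., x_r - α_{ri}. Then: (a) the quasi-monomials e_v (over all monomials v, including e_1 = 1) form a linear basis of R; (b) e_v · x_j = e_{v x_j} + α_{j, d+1}·e_v where d = deg v; (c) the quasi-monomials e_v with deg v ≥ m form a linear basis of the product Δ₁Δ₂···Δ_m. -/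

import Mathlib

noncomputable section

/-- The quasi-monomial `e_v = (x_{j₁} - α_{j₁,1})⋯(x_{j_d} - α_{j_d,d})` associated to the
monomial `v = x_{j₁}⋯x_{j_d}` and the scalar sequences `α`. -/
def quasiMonomial {Φ : Type*} [Field Φ] {r : ℕ} (α : Fin r → ℕ → Φ)
    (v : List (Fin r)) : FreeAlgebra Φ (Fin r) :=
  (v.zipIdx.map (fun p =>
    FreeAlgebra.ι Φ p.1 - algebraMap Φ (FreeAlgebra Φ (Fin r)) (α p.1 (p.2 + 1)))).prod

/-- The two-sided ideal `Δ_i` generated by `x₁ - α_{1i}, …, x_r - α_{ri}`, as a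
`Φ`-submodule of the free associative algebra. -/
def shiftIdeal {Φ : Type*} [Field Φ] {r : ℕ} (α : Fin r → ℕ → Φ) (i : ℕ) :
    Submodule Φ (FreeAlgebra Φ (Fin r)) :=
  Submodule.span Φ
    {x | ∃ (a b : FreeAlgebra Φ (Fin r)) (j : Fin r),
      x = a * (FreeAlgebra.ι Φ j - algebraMap Φ (FreeAlgebra Φ (Fin r)) (α j i)) * b}

namespace QMaux

variable {Φ : Type*} [Field Φ] {r : ℕ} (α : Fin r → ℕ → Φ)

def qmF (k : ℕ) (w : List (Fin r)) : FreeAlgebra Φ (Fin r) :=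
  ((w.zipIdx k).map (fun p =>
    FreeAlgebra.ι Φ p.1 - algebraMap Φ (FreeAlgebra Φ (Fin r)) (α p.1 (p.2 + 1)))).prod

lemma qmF_zero (v : List (Fin r)) : qmF α 0 v = quasiMonomial α v := rfl

lemma qmF_append (k : ℕ) (u w : List (Fin r)) :
    qmF α k (u ++ w) = qmF α k u * qmF α (k + u.length) w := by
  unfold qmF
  rw [List.zipIdx_append, List.map_append, List.prod_append]

lemma qmF_cons (k : ℕ) (j : Fin r) (w : List (Fin r)) :
    qmF α k (j :: w) =
      (FreeAlgebra.ι Φ j - algebraMap Φ (FreeAlgebra Φ (Fin r)) (α j (k + 1))) * qmF α (k+1) w := by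
  unfold qmF
  rw [List.zipIdx_cons, List.map_cons, List.prod_cons]

lemma quasi_nil : quasiMonomial α ([] : List (Fin r)) = 1 := rfl

lemma quasi_snoc (v : List (Fin r)) (j : Fin r) :
    quasiMonomial α (v ++ [j]) =
      quasiMonomial α v *
        (FreeAlgebra.ι Φ j - algebraMap Φ (FreeAlgebra Φ (Fin r)) (α j (v.length + 1))) := by
  rw [← qmF_zero, ← qmF_zero, qmF_append, qmF_cons]
  simp [qmF]

lemma mul_algebraMap (y : FreeAlgebra Φ (Fin r)) (c : Φ) :
    y * algebraMap Φ (FreeAlgebra Φ (Fin r)) c = c • y := by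
  rw [← Algebra.commutes, ← Algebra.smul_def]

lemma partB (v : List (Fin r)) (j : Fin r) :
    quasiMonomial α v * FreeAlgebra.ι Φ j
      = quasiMonomial α (v ++ [j]) + α j (v.length + 1) • quasiMonomial α v := by
  rw [quasi_snoc, mul_sub, mul_algebraMap]
  abel

/-- the span of the quasi-monomials of length at least `m` -/
def S (m : ℕ) : Submodule Φ (FreeAlgebra Φ (Fin r)) :=
  Submodule.span Φ {x | ∃ v : List (Fin r), m ≤ v.length ∧ x = quasiMonomial α v}

lemma mem_S {m : ℕ} {v : List (Fin r)} (h : m ≤ v.length) : quasiMonomial α v ∈ S α m :=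
  Submodule.subset_span ⟨v, h, rfl⟩

/-- `S m` is a right ideal -/
lemma S_mul_mem (m : ℕ) (a : FreeAlgebra Φ (Fin r)) :
    ∀ y ∈ S α m, y * a ∈ S α m := by
  induction a using FreeAlgebra.induction with
  | grade0 c => intro y hy; rw [mul_algebraMap]; exact (S α m).smul_mem c hy
  | grade1 j =>
      intro y hy
      refine Submodule.span_induction (fun x hx => ?_) ?_ ?_ ?_ hy
      · obtain ⟨v, hv, rfl⟩ := hx
        rw [partB]
        exact add_mem (mem_S α (hv.trans (by simp))) ((S α m).smul_mem _ (mem_S α hv))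
      · simp
      · intro x y _ _ hx hy; rw [add_mul]; exact add_mem hx hy
      · intro c x _ hx; rw [smul_mul_assoc]; exact (S α m).smul_mem c hx
  | mul a b iha ihb => intro y hy; rw [← mul_assoc]; exact ihb _ (iha _ hy)
  | add a b iha ihb => intro y hy; rw [mul_add]; exact add_mem (iha y hy) (ihb y hy)

lemma S_zero_top (x : FreeAlgebra Φ (Fin r)) : x ∈ S α 0 := by
  induction x using FreeAlgebra.induction with
  | grade0 c =>
      rw [Algebra.algebraMap_eq_smul_one, ← quasi_nil α]
      exact (S α 0).smul_mem c (mem_S α (by simp))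
  | grade1 j =>
      have := partB α [] j
      rw [quasi_nil, one_mul] at this
      rw [this]
      have h1 : (1 : FreeAlgebra Φ (Fin r)) ∈ S α 0 := by
        rw [← quasi_nil α]; exact mem_S α (by simp)
      exact add_mem (mem_S α (by simp)) ((S α 0).smul_mem _ h1)
  | mul a b iha ihb => exact S_mul_mem α 0 b a iha
  | add a b iha ihb => exact add_mem iha ihb

/-- key lemma: multiplying `S k` by the generator at position `k+1` lands in `S (k+1)` -/
lemma mul_gen_mem (k : ℕ) (j : Fin r) :
    ∀ y ∈ S α k,
      y * (FreeAlgebra.ι Φ j - algebraMap Φ (FreeAlgebra Φ (Fin r)) (α j (k + 1))) ∈ S α (k+1) := by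
  intro y hy
  refine Submodule.span_induction (fun x hx => ?_) ?_ ?_ ?_ hy
  · obtain ⟨t, ht, rfl⟩ := hx
    have key : quasiMonomial α t *
        (FreeAlgebra.ι Φ j - algebraMap Φ (FreeAlgebra Φ (Fin r)) (α j (k + 1)))
        = quasiMonomial α (t ++ [j]) + α j (t.length + 1) • quasiMonomial α t
          - α j (k+1) • quasiMonomial α t := by
      rw [mul_sub, mul_algebraMap, partB]
    rw [key]
    rcases eq_or_lt_of_le ht with h | h
    · rw [← h, add_sub_cancel_right]
      exact mem_S α (by simp [← h])
    · exact sub_mem (add_mem (mem_S α (by simp; omega)) ((S α _).smul_mem _ (mem_S α h)))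
        ((S α _).smul_mem _ (mem_S α h))
  · simp
  · intro x y _ _ hx hy; rw [add_mul]; exact add_mem hx hy
  · intro c x _ hx; rw [smul_mul_assoc]; exact (S α _).smul_mem c hx

lemma prod_eq (m : ℕ) :
    ((List.range (m+1)).map (fun i => shiftIdeal α (i + 1))).prod = S α (m+1) := by
  induction m with
  | zero =>
      have h01 : List.range 1 = [0] := rfl
      simp only [h01, List.map_cons, List.map_nil, List.prod_singleton]
      apply le_antisymm
      · rw [shiftIdeal, Submodule.span_le]
        rintro x ⟨a, b, j, rfl⟩
        exact S_mul_mem α 1 b _ (mul_gen_mem α 0 j a (S_zero_top α a))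
      · rw [S, Submodule.span_le]
        rintro x ⟨v, hv, rfl⟩
        cases v with
        | nil => simp at hv
        | cons j w =>
            apply Submodule.subset_span
            exact ⟨1, qmF α 1 w, j, by rw [one_mul, ← qmF_zero, qmF_cons, zero_add]⟩
  | succ m ih =>
      rw [List.range_succ, List.map_append, List.prod_append, List.map_singleton,
        List.prod_singleton, ih]
      apply le_antisymm
      · refine Submodule.mul_le.mpr (fun x hx y hy => ?_)
        refine Submodule.span_induction (fun z hz => ?_) ?_ ?_ ?_ hy
        · obtain ⟨a, b, j, rfl⟩ := hz
          have h1 : x * a ∈ S α (m+1) := S_mul_mem α (m+1) a x hx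
          have h2 := mul_gen_mem α (m+1) j (x*a) h1
          have h3 := S_mul_mem α (m+1+1) b _ h2
          rw [← mul_assoc, ← mul_assoc]
          exact h3
        · simp
        · intro u v _ _ hu hv; rw [mul_add]; exact add_mem hu hv
        · intro c u _ hu; rw [mul_smul_comm]; exact (S α _).smul_mem c hu
      · rw [S, Submodule.span_le]
        rintro x ⟨v, hv, rfl⟩
        have hsplit : v = v.take (m+1) ++ v.drop (m+1) := (List.take_append_drop _ _).symm
        have hu : (v.take (m+1)).length = m + 1 := by
          rw [List.length_take]; omega
        cases hw : v.drop (m+1) with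
        | nil =>
            exfalso
            have := List.length_drop (i := m+1) (l := v)
            rw [hw] at this
            simp at this
            omega
        | cons j w' =>
            have heq : quasiMonomial α v = quasiMonomial α (v.take (m+1)) *
                ((FreeAlgebra.ι Φ j - algebraMap Φ (FreeAlgebra Φ (Fin r)) (α j (m+1+1))) *
                  qmF α (m+1+1) w') := by
              conv_lhs => rw [hsplit, hw]
              rw [← qmF_zero, ← qmF_zero, qmF_append, zero_add, hu, qmF_cons]
            rw [heq]
            refine Submodule.mul_mem_mul (mem_S α (le_of_eq hu.symm)) ?_
            exact Submodule.subset_span ⟨1, qmF α (m+1+1) w', j, by rw [one_mul]⟩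

open scoped Classical

/-- image of the quasi-monomial in the monoid algebra -/
def E (v : List (Fin r)) : MonoidAlgebra Φ (FreeMonoid (Fin r)) :=
  FreeAlgebra.equivMonoidAlgebraFreeMonoid (quasiMonomial α v)

lemma phi_iota (j : Fin r) : FreeAlgebra.equivMonoidAlgebraFreeMonoid (FreeAlgebra.ι Φ j)
    = MonoidAlgebra.single (FreeMonoid.of j) 1 := by
  simp [FreeAlgebra.equivMonoidAlgebraFreeMonoid]

lemma E_snoc (v : List (Fin r)) (j : Fin r) :
    E α (v ++ [j]) = E α v * MonoidAlgebra.single (FreeMonoid.of j) 1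
      - α j (v.length + 1) • E α v := by
  unfold E
  rw [quasi_snoc, map_mul, map_sub, AlgEquiv.commutes, phi_iota, mul_sub]
  congr 1
  rw [← Algebra.commutes, ← Algebra.smul_def]

lemma E_apply (v : List (Fin r)) : ∀ (w : FreeMonoid (Fin r)), v.length ≤ w.length →
    (E α v).coeff w = if w = FreeMonoid.ofList v then 1 else 0 := by
  induction v using List.reverseRecOn with
  | nil =>
      intro w _
      have h1 : E α ([] : List (Fin r)) = 1 := by unfold E; rw [quasi_nil, map_one]
      rw [h1, MonoidAlgebra.one_def, MonoidAlgebra.coeff_single, Finsupp.single_apply, FreeMonoid.ofList_nil]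
      simp [eq_comm]
  | append_singleton v j ih =>
      intro w hw
      have hlen : v.length + 1 ≤ w.length := by
        simpa using hw
      have hEv : (E α v).coeff w = 0 := by
        rw [ih w (by omega), if_neg]
        intro h
        have : w.length = v.length := by subst h; rfl
        omega
      rw [E_snoc, MonoidAlgebra.coeff_sub, Finsupp.sub_apply, MonoidAlgebra.coeff_smul, Finsupp.smul_apply, hEv, smul_zero, sub_zero]
      by_cases hx : ∃ u : FreeMonoid (Fin r), w = u * FreeMonoid.of j
      · obtain ⟨u, rfl⟩ := hx
        have hulen : v.length ≤ u.length := by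
          rw [FreeMonoid.length_mul, FreeMonoid.length_of] at hlen
          omega
        rw [MonoidAlgebra.coeff_mul_single_eq_coeff_mul (m₂ := u) (fun a _ => mul_left_inj _),
          ih u hulen]
        have hiff : (u * FreeMonoid.of j = FreeMonoid.ofList (v ++ [j]))
            ↔ (u = FreeMonoid.ofList v) := by
          rw [FreeMonoid.ofList_append]
          exact mul_left_inj _
        by_cases h : u = FreeMonoid.ofList v <;> simp [h, hiff]
      · rw [MonoidAlgebra.mul_single_apply_of_not_exists_mul _ _ hx, if_neg]
        intro h
        exact hx ⟨FreeMonoid.ofList v, by rw [h, FreeMonoid.ofList_append]; rfl⟩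

lemma E_indep_aux : ∀ (n : ℕ) (s : Finset (List (Fin r))) (g : List (Fin r) → Φ),
    (∀ v ∈ s, v.length < n) → (∑ w ∈ s, g w • E α w) = 0 → ∀ v ∈ s, g v = 0 := by
  classical
  intro n
  induction n with
  | zero => intro s g hs _ v hv; exact absurd (hs v hv) (by omega)
  | succ n ihn =>
      intro s g hs hsum
      have key : ∀ v ∈ s, v.length = n → g v = 0 := by
        intro v hv hvn
        have h0 : (∑ w ∈ s, g w • E α w).coeff (FreeMonoid.ofList v) = 0 := by rw [hsum]; rfl
        rw [MonoidAlgebra.coeff_sum, Finsupp.finset_sum_apply] at h0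
        have h1 : ∀ w ∈ s, (g w • E α w).coeff (FreeMonoid.ofList v)
            = if w = v then g v else 0 := by
          intro w hw
          rw [MonoidAlgebra.coeff_smul, Finsupp.smul_apply, E_apply α w (FreeMonoid.ofList v)
            (by have := hs w hw; show w.length ≤ v.length; omega)]
          by_cases h : w = v
          · subst h; simp
          · rw [if_neg (fun hc => h (FreeMonoid.ofList.injective hc).symm), if_neg h,
              smul_zero]
        rw [Finset.sum_congr rfl h1, Finset.sum_ite_eq' s v (fun _ => g v),
          if_pos hv] at h0
        exact h0
      intro v hv
      by_cases hvn : v.length < n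
      · refine ihn (s.filter (fun w => w.length < n)) g
          (by intro w hw; exact (Finset.mem_filter.mp hw).2) ?_ v
          (Finset.mem_filter.mpr ⟨hv, hvn⟩)
        rw [Finset.sum_filter_of_ne, hsum]
        intro w hw hne
        by_contra hlt
        simp only [not_lt] at hlt
        have : w.length = n := by have := hs w hw; omega
        rw [key w hw this, zero_smul] at hne
        exact hne rfl
      · have : v.length = n := by have := hs v hv; omega
        exact key v hv this

lemma E_indep : LinearIndependent Φ (fun v : List (Fin r) => E α v) := by
  classical
  rw [linearIndependent_iff']
  intro s g hsum i hi
  refine E_indep_aux α (s.sup List.length + 1) s g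
    (fun v hv => Nat.lt_succ_of_le (Finset.le_sup hv)) hsum i hi

lemma quasi_indep : LinearIndependent Φ (fun v : List (Fin r) => quasiMonomial α v) := by
  refine LinearIndependent.of_comp
    (FreeAlgebra.equivMonoidAlgebraFreeMonoid
      (R := Φ) (X := Fin r)).toLinearMap ?_
  exact E_indep α

end QMaux

/-- (a) The quasi-monomials `e_v` form a linear basis of the free associative algebra;
(b) `e_v·x_j = e_{v x_j} + α_{j,d+1}·e_v` where `d = deg v`;
(c) the quasi-monomials `e_v` with `deg v ≥ m` span the product `Δ₁Δ₂⋯Δ_m`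
(hence, being linearly independent by (a), form a basis of it). -/
theorem quasiMonomial_basis_and_product (Φ : Type*) [Field Φ] (r : ℕ) (hr : 1 < r)
    (α : Fin r → ℕ → Φ) :
    (LinearIndependent Φ (fun v : List (Fin r) => quasiMonomial α v) ∧
      Submodule.span Φ (Set.range (fun v : List (Fin r) => quasiMonomial α v)) = ⊤) ∧
    (∀ (v : List (Fin r)) (j : Fin r),
      quasiMonomial α v * FreeAlgebra.ι Φ j
        = quasiMonomial α (v ++ [j]) + α j (v.length + 1) • quasiMonomial α v) ∧
    (∀ m : ℕ, 1 ≤ m →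
      ((List.range m).map (fun i => shiftIdeal α (i + 1))).prod
        = Submodule.span Φ
            {x | ∃ v : List (Fin r), m ≤ v.length ∧ x = quasiMonomial α v}) := by
  refine ⟨⟨QMaux.quasi_indep α, ?_⟩, QMaux.partB α, ?_⟩
  · have hset : {x | ∃ v : List (Fin r), 0 ≤ v.length ∧ x = quasiMonomial α v}
        = Set.range (fun v : List (Fin r) => quasiMonomial α v) := by
      ext y; simp [eq_comm]
    rw [eq_top_iff]
    intro x _
    have hx := QMaux.S_zero_top α x
    rwa [QMaux.S, hset] at hx
  · intro m hm
    obtain ⟨k, rfl⟩ : ∃ k, m = k + 1 := ⟨m - 1, by omega⟩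
    exact QMaux.prod_eq α k


end
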